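/- Let a, b, c, d, e, f, g, h, i be positive integers satisfying the six diamond equations a*d = 1+b, d*g = 1+e, g*i = 1+h, b*e = (1+c)*(1+d), e*h = (1+f)*(1+g), c*f = 1+e. Then there exists a closed arithmetic Coxeter frieze pattern F of width 3 whose second row is the 6-periodic sequence repeating (a, d, g, i, c, f); that is, there exists F : ℤ → ℤ → ℤ with F r (r-1) = 0, F r r = 1, F r (r+4) = 1 for all r, F r s ≥ 1 whenever r ≤ s ≤ r+4, F r s * F (r+1) (s+1) − F r (s+1) * F (r+1) s = 1 whenever r ≤ s ≤ r+3, and F r (r+2) = y r for all r, where y : ℤ → ℤ is the 6-periodic sequence with (y 0, y 1, y 2, y 3, y 4, y 5) = (a, d, g, i, c, f). (This expresses the surjectivity of the map p_3 from arithmetic Coxeter frieze patterns of width 3 to arithmetic Y-frieze patterns of width 3.) -/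

import Mathlib

private def mkx (v0 v1 v2 v3 v4 v5 : ℤ) (r : ℤ) : ℤ :=
  if r % 6 = 0 then v0 else if r % 6 = 1 then v1 else if r % 6 = 2 then v2
  else if r % 6 = 3 then v3 else if r % 6 = 4 then v4 else v5

private lemma mkx_cases (v0 v1 v2 v3 v4 v5 r : ℤ) :
    (r % 6 = 0 ∧ mkx v0 v1 v2 v3 v4 v5 r = v0 ∧ mkx v0 v1 v2 v3 v4 v5 (r + 1) = v1 ∧ mkx v0 v1 v2 v3 v4 v5 (r + 2) = v2 ∧ mkx v0 v1 v2 v3 v4 v5 (r + 3) = v3 ∧ mkx v0 v1 v2 v3 v4 v5 (r + 4) = v4 ∧ mkx v0 v1 v2 v3 v4 v5 (r + 5) = v5) ∨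
    (r % 6 = 1 ∧ mkx v0 v1 v2 v3 v4 v5 r = v1 ∧ mkx v0 v1 v2 v3 v4 v5 (r + 1) = v2 ∧ mkx v0 v1 v2 v3 v4 v5 (r + 2) = v3 ∧ mkx v0 v1 v2 v3 v4 v5 (r + 3) = v4 ∧ mkx v0 v1 v2 v3 v4 v5 (r + 4) = v5 ∧ mkx v0 v1 v2 v3 v4 v5 (r + 5) = v0) ∨
    (r % 6 = 2 ∧ mkx v0 v1 v2 v3 v4 v5 r = v2 ∧ mkx v0 v1 v2 v3 v4 v5 (r + 1) = v3 ∧ mkx v0 v1 v2 v3 v4 v5 (r + 2) = v4 ∧ mkx v0 v1 v2 v3 v4 v5 (r + 3) = v5 ∧ mkx v0 v1 v2 v3 v4 v5 (r + 4) = v0 ∧ mkx v0 v1 v2 v3 v4 v5 (r + 5) = v1) ∨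
    (r % 6 = 3 ∧ mkx v0 v1 v2 v3 v4 v5 r = v3 ∧ mkx v0 v1 v2 v3 v4 v5 (r + 1) = v4 ∧ mkx v0 v1 v2 v3 v4 v5 (r + 2) = v5 ∧ mkx v0 v1 v2 v3 v4 v5 (r + 3) = v0 ∧ mkx v0 v1 v2 v3 v4 v5 (r + 4) = v1 ∧ mkx v0 v1 v2 v3 v4 v5 (r + 5) = v2) ∨
    (r % 6 = 4 ∧ mkx v0 v1 v2 v3 v4 v5 r = v4 ∧ mkx v0 v1 v2 v3 v4 v5 (r + 1) = v5 ∧ mkx v0 v1 v2 v3 v4 v5 (r + 2) = v0 ∧ mkx v0 v1 v2 v3 v4 v5 (r + 3) = v1 ∧ mkx v0 v1 v2 v3 v4 v5 (r + 4) = v2 ∧ mkx v0 v1 v2 v3 v4 v5 (r + 5) = v3) ∨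
    (r % 6 = 5 ∧ mkx v0 v1 v2 v3 v4 v5 r = v5 ∧ mkx v0 v1 v2 v3 v4 v5 (r + 1) = v0 ∧ mkx v0 v1 v2 v3 v4 v5 (r + 2) = v1 ∧ mkx v0 v1 v2 v3 v4 v5 (r + 3) = v2 ∧ mkx v0 v1 v2 v3 v4 v5 (r + 4) = v3 ∧ mkx v0 v1 v2 v3 v4 v5 (r + 5) = v4) := by
  have h : r % 6 = 0 ∨ r % 6 = 1 ∨ r % 6 = 2 ∨ r % 6 = 3 ∨ r % 6 = 4 ∨ r % 6 = 5 := by omega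
  rcases h with h|h|h|h|h|h
  · refine (Or.inl ⟨h, ?_, ?_, ?_, ?_, ?_, ?_⟩)
    · simp [mkx, h]
    · have e : (r + 1) % 6 = 1 := by omega
      simp [mkx, e]
    · have e : (r + 2) % 6 = 2 := by omega
      simp [mkx, e]
    · have e : (r + 3) % 6 = 3 := by omega
      simp [mkx, e]
    · have e : (r + 4) % 6 = 4 := by omega
      simp [mkx, e]
    · have e : (r + 5) % 6 = 5 := by omega
      simp [mkx, e]
  · refine Or.inr ((Or.inl ⟨h, ?_, ?_, ?_, ?_, ?_, ?_⟩))
    · simp [mkx, h]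
    · have e : (r + 1) % 6 = 2 := by omega
      simp [mkx, e]
    · have e : (r + 2) % 6 = 3 := by omega
      simp [mkx, e]
    · have e : (r + 3) % 6 = 4 := by omega
      simp [mkx, e]
    · have e : (r + 4) % 6 = 5 := by omega
      simp [mkx, e]
    · have e : (r + 5) % 6 = 0 := by omega
      simp [mkx, e]
  · refine Or.inr (Or.inr ((Or.inl ⟨h, ?_, ?_, ?_, ?_, ?_, ?_⟩)))
    · simp [mkx, h]
    · have e : (r + 1) % 6 = 3 := by omega
      simp [mkx, e]
    · have e : (r + 2) % 6 = 4 := by omega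
      simp [mkx, e]
    · have e : (r + 3) % 6 = 5 := by omega
      simp [mkx, e]
    · have e : (r + 4) % 6 = 0 := by omega
      simp [mkx, e]
    · have e : (r + 5) % 6 = 1 := by omega
      simp [mkx, e]
  · refine Or.inr (Or.inr (Or.inr ((Or.inl ⟨h, ?_, ?_, ?_, ?_, ?_, ?_⟩))))
    · simp [mkx, h]
    · have e : (r + 1) % 6 = 4 := by omega
      simp [mkx, e]
    · have e : (r + 2) % 6 = 5 := by omega
      simp [mkx, e]
    · have e : (r + 3) % 6 = 0 := by omega
      simp [mkx, e]
    · have e : (r + 4) % 6 = 1 := by omega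
      simp [mkx, e]
    · have e : (r + 5) % 6 = 2 := by omega
      simp [mkx, e]
  · refine Or.inr (Or.inr (Or.inr (Or.inr ((Or.inl ⟨h, ?_, ?_, ?_, ?_, ?_, ?_⟩)))))
    · simp [mkx, h]
    · have e : (r + 1) % 6 = 5 := by omega
      simp [mkx, e]
    · have e : (r + 2) % 6 = 0 := by omega
      simp [mkx, e]
    · have e : (r + 3) % 6 = 1 := by omega
      simp [mkx, e]
    · have e : (r + 4) % 6 = 2 := by omega
      simp [mkx, e]
    · have e : (r + 5) % 6 = 3 := by omega
      simp [mkx, e]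
  · refine Or.inr (Or.inr (Or.inr (Or.inr (Or.inr (⟨h, ?_, ?_, ?_, ?_, ?_, ?_⟩)))))
    · simp [mkx, h]
    · have e : (r + 1) % 6 = 0 := by omega
      simp [mkx, e]
    · have e : (r + 2) % 6 = 1 := by omega
      simp [mkx, e]
    · have e : (r + 3) % 6 = 2 := by omega
      simp [mkx, e]
    · have e : (r + 4) % 6 = 3 := by omega
      simp [mkx, e]
    · have e : (r + 5) % 6 = 4 := by omega
      simp [mkx, e]


private def mkF (v0 v1 v2 v3 v4 v5 : ℤ) (r s : ℤ) : ℤ :=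
  if s = r - 1 then 0 else if s = r then 1
  else if s = r + 1 then mkx v0 v1 v2 v3 v4 v5 r
  else if s = r + 2 then mkx v0 v1 v2 v3 v4 v5 r * mkx v0 v1 v2 v3 v4 v5 (r + 1) - 1
  else if s = r + 3 then mkx v0 v1 v2 v3 v4 v5 (r + 4)
  else if s = r + 4 then 1 else 0

private lemma mkF_m1 (v0 v1 v2 v3 v4 v5 r s : ℤ) (h : s = r - 1) :
    mkF v0 v1 v2 v3 v4 v5 r s = 0 := by
  unfold mkF; rw [if_pos h]

private lemma mkF_0 (v0 v1 v2 v3 v4 v5 r s : ℤ) (h : s = r) :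
    mkF v0 v1 v2 v3 v4 v5 r s = 1 := by
  unfold mkF; rw [if_neg (by omega), if_pos h]

private lemma mkF_1 (v0 v1 v2 v3 v4 v5 r s : ℤ) (h : s = r + 1) :
    mkF v0 v1 v2 v3 v4 v5 r s = mkx v0 v1 v2 v3 v4 v5 r := by
  unfold mkF; rw [if_neg (by omega), if_neg (by omega), if_pos h]

private lemma mkF_2 (v0 v1 v2 v3 v4 v5 r s : ℤ) (h : s = r + 2) :
    mkF v0 v1 v2 v3 v4 v5 r s
      = mkx v0 v1 v2 v3 v4 v5 r * mkx v0 v1 v2 v3 v4 v5 (r + 1) - 1 := by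
  unfold mkF; rw [if_neg (by omega), if_neg (by omega), if_neg (by omega), if_pos h]

private lemma mkF_3 (v0 v1 v2 v3 v4 v5 r s : ℤ) (h : s = r + 3) :
    mkF v0 v1 v2 v3 v4 v5 r s = mkx v0 v1 v2 v3 v4 v5 (r + 4) := by
  unfold mkF
  rw [if_neg (by omega), if_neg (by omega), if_neg (by omega), if_neg (by omega), if_pos h]

private lemma mkF_4 (v0 v1 v2 v3 v4 v5 r s : ℤ) (h : s = r + 4) :
    mkF v0 v1 v2 v3 v4 v5 r s = 1 := by
  unfold mkF
  rw [if_neg (by omega), if_neg (by omega), if_neg (by omega), if_neg (by omega),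
    if_neg (by omega), if_pos h]

private lemma per6 (y : ℤ → ℤ) (hyper : ∀ r : ℤ, y (r + 6) = y r) :
    ∀ k n : ℤ, y (n + 6 * k) = y n := by
  intro k
  induction k using Int.induction_on with
  | zero => intro n; norm_num
  | succ k ih =>
      intro n
      have h : n + 6 * ((k : ℤ) + 1) = (n + 6 * k) + 6 := by ring
      rw [h, hyper, ih]
  | pred k ih =>
      intro n
      have h2 := hyper (n + 6 * (-(k : ℤ) - 1))
      have h : n + 6 * (-(k : ℤ) - 1) + 6 = n + 6 * (-(k : ℤ)) := by ring
      rw [h] at h2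
      rw [← ih n, ← h2]

private lemma y_emod (y : ℤ → ℤ) (hyper : ∀ r : ℤ, y (r + 6) = y r) (r : ℤ) :
    y r = y (r % 6) := by
  have h := per6 y hyper (r / 6) (r % 6)
  rw [Int.emod_add_mul_ediv] at h
  exact h

private theorem masterF (x0 x1 x2 x3 x4 x5 : ℤ) (y : ℤ → ℤ)
    (hx0 : 1 ≤ x0)
    (hx1 : 1 ≤ x1)
    (hx2 : 1 ≤ x2)
    (hx3 : 1 ≤ x3)
    (hx4 : 1 ≤ x4)
    (hx5 : 1 ≤ x5)
    (hp0 : 2 ≤ x0 * x1)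
    (hp1 : 2 ≤ x1 * x2)
    (hp2 : 2 ≤ x2 * x3)
    (hp3 : 2 ≤ x3 * x4)
    (hp4 : 2 ≤ x4 * x5)
    (hp5 : 2 ≤ x5 * x0)
    (hB0 : x0 * x1 = x3 * x4) (hB1 : x1 * x2 = x4 * x5) (hB2 : x2 * x3 = x5 * x0)
    (hA0 : (x0 * x1 - 1) * (x1 * x2 - 1) - x4 * x1 = 1)
    (hA1 : (x1 * x2 - 1) * (x2 * x3 - 1) - x5 * x2 = 1)
    (hA2 : (x2 * x3 - 1) * (x3 * x4 - 1) - x0 * x3 = 1)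
    (hA3 : (x3 * x4 - 1) * (x4 * x5 - 1) - x1 * x4 = 1)
    (hA4 : (x4 * x5 - 1) * (x5 * x0 - 1) - x2 * x5 = 1)
    (hA5 : (x5 * x0 - 1) * (x0 * x1 - 1) - x3 * x0 = 1)
    (hyper : ∀ r : ℤ, y (r + 6) = y r)
    (hy0 : y 0 = x0 * x1 - 1)
    (hy1 : y 1 = x1 * x2 - 1)
    (hy2 : y 2 = x2 * x3 - 1)
    (hy3 : y 3 = x3 * x4 - 1)
    (hy4 : y 4 = x4 * x5 - 1)
    (hy5 : y 5 = x5 * x0 - 1) :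
    ∃ F : ℤ → ℤ → ℤ,
      (∀ r : ℤ, F r (r - 1) = 0) ∧
      (∀ r : ℤ, F r r = 1) ∧
      (∀ r : ℤ, F r (r + 4) = 1) ∧
      (∀ r s : ℤ, r ≤ s → s ≤ r + 4 → 1 ≤ F r s) ∧
      (∀ r s : ℤ, r ≤ s → s ≤ r + 3 →
        F r s * F (r + 1) (s + 1) - F r (s + 1) * F (r + 1) s = 1) ∧
      (∀ r : ℤ, F r (r + 2) = y r) := by
  refine ⟨mkF x0 x1 x2 x3 x4 x5, fun r => mkF_m1 _ _ _ _ _ _ r _ rfl,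
    fun r => mkF_0 _ _ _ _ _ _ r _ rfl, fun r => mkF_4 _ _ _ _ _ _ r _ rfl, ?_, ?_, ?_⟩
  · -- positivity
    intro r s hrs hsr
    have hc : s = r ∨ s = r + 1 ∨ s = r + 2 ∨ s = r + 3 ∨ s = r + 4 := by omega
    rcases hc with hc|hc|hc|hc|hc
    · rw [mkF_0 _ _ _ _ _ _ r s hc]
    · rw [mkF_1 _ _ _ _ _ _ r s hc]
      rcases mkx_cases x0 x1 x2 x3 x4 x5 r with
        ⟨hj,e0,e1,e2,e3,e4,e5⟩|⟨hj,e0,e1,e2,e3,e4,e5⟩|⟨hj,e0,e1,e2,e3,e4,e5⟩|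
        ⟨hj,e0,e1,e2,e3,e4,e5⟩|⟨hj,e0,e1,e2,e3,e4,e5⟩|⟨hj,e0,e1,e2,e3,e4,e5⟩ <;>
        rw [e0] <;> assumption
    · rw [mkF_2 _ _ _ _ _ _ r s hc]
      rcases mkx_cases x0 x1 x2 x3 x4 x5 r with
        ⟨hj,e0,e1,e2,e3,e4,e5⟩|⟨hj,e0,e1,e2,e3,e4,e5⟩|⟨hj,e0,e1,e2,e3,e4,e5⟩|
        ⟨hj,e0,e1,e2,e3,e4,e5⟩|⟨hj,e0,e1,e2,e3,e4,e5⟩|⟨hj,e0,e1,e2,e3,e4,e5⟩ <;>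
        rw [e0, e1] <;> omega
    · rw [mkF_3 _ _ _ _ _ _ r s hc]
      rcases mkx_cases x0 x1 x2 x3 x4 x5 r with
        ⟨hj,e0,e1,e2,e3,e4,e5⟩|⟨hj,e0,e1,e2,e3,e4,e5⟩|⟨hj,e0,e1,e2,e3,e4,e5⟩|
        ⟨hj,e0,e1,e2,e3,e4,e5⟩|⟨hj,e0,e1,e2,e3,e4,e5⟩|⟨hj,e0,e1,e2,e3,e4,e5⟩ <;>
        rw [e4] <;> assumption
    · rw [mkF_4 _ _ _ _ _ _ r s hc]
  · -- diamond
    intro r s hrs hsr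
    have hc : s = r ∨ s = r + 1 ∨ s = r + 2 ∨ s = r + 3 := by omega
    rcases hc with hc|hc|hc|hc
    · rw [mkF_0 _ _ _ _ _ _ r s hc, mkF_0 _ _ _ _ _ _ (r+1) (s+1) (by omega),
        mkF_1 _ _ _ _ _ _ r (s+1) (by omega), mkF_m1 _ _ _ _ _ _ (r+1) s (by omega)]
      ring
    · rw [mkF_1 _ _ _ _ _ _ r s hc, mkF_1 _ _ _ _ _ _ (r+1) (s+1) (by omega),
        mkF_2 _ _ _ _ _ _ r (s+1) (by omega), mkF_0 _ _ _ _ _ _ (r+1) s (by omega)]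
      ring
    · rw [mkF_2 _ _ _ _ _ _ r s hc, mkF_2 _ _ _ _ _ _ (r+1) (s+1) (by omega),
        mkF_3 _ _ _ _ _ _ r (s+1) (by omega), mkF_1 _ _ _ _ _ _ (r+1) s (by omega)]
      have en : (r : ℤ) + 1 + 1 = r + 2 := by ring
      rw [en]
      rcases mkx_cases x0 x1 x2 x3 x4 x5 r with
        ⟨hj,e0,e1,e2,e3,e4,e5⟩|⟨hj,e0,e1,e2,e3,e4,e5⟩|⟨hj,e0,e1,e2,e3,e4,e5⟩|
        ⟨hj,e0,e1,e2,e3,e4,e5⟩|⟨hj,e0,e1,e2,e3,e4,e5⟩|⟨hj,e0,e1,e2,e3,e4,e5⟩ <;>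
        rw [e0, e1, e2, e4] <;> linarith [hA0, hA1, hA2, hA3, hA4, hA5]
    · rw [mkF_3 _ _ _ _ _ _ r s hc, mkF_3 _ _ _ _ _ _ (r+1) (s+1) (by omega),
        mkF_4 _ _ _ _ _ _ r (s+1) (by omega), mkF_2 _ _ _ _ _ _ (r+1) s (by omega)]
      have en : (r : ℤ) + 1 + 4 = r + 5 := by ring
      have en2 : (r : ℤ) + 1 + 1 = r + 2 := by ring
      rw [en, en2]
      rcases mkx_cases x0 x1 x2 x3 x4 x5 r with
        ⟨hj,e0,e1,e2,e3,e4,e5⟩|⟨hj,e0,e1,e2,e3,e4,e5⟩|⟨hj,e0,e1,e2,e3,e4,e5⟩|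
        ⟨hj,e0,e1,e2,e3,e4,e5⟩|⟨hj,e0,e1,e2,e3,e4,e5⟩|⟨hj,e0,e1,e2,e3,e4,e5⟩ <;>
        rw [e1, e2, e4, e5] <;> linarith [hB0, hB1, hB2]
  · -- second row
    intro r
    rw [mkF_2 _ _ _ _ _ _ r (r+2) rfl, y_emod y hyper r]
    rcases mkx_cases x0 x1 x2 x3 x4 x5 r with
      ⟨hj,e0,e1,e2,e3,e4,e5⟩|⟨hj,e0,e1,e2,e3,e4,e5⟩|⟨hj,e0,e1,e2,e3,e4,e5⟩|
      ⟨hj,e0,e1,e2,e3,e4,e5⟩|⟨hj,e0,e1,e2,e3,e4,e5⟩|⟨hj,e0,e1,e2,e3,e4,e5⟩ <;>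
      rw [e0, e1, hj] <;>
      simp only [hy0, hy1, hy2, hy3, hy4, hy5]

set_option maxHeartbeats 2000000 in
private lemma classify (a c d f g i : ℤ)
    (ha : 0 < a) (hc : 0 < c) (hd : 0 < d)
    (hf : 0 < f) (hg : 0 < g) (hi : 0 < i)
    (hb : 0 < a * d - 1) (he : 0 < d * g - 1) (hh : 0 < g * i - 1)
    (e4 : (a * d - 1) * (d * g - 1) = (1 + c) * (1 + d))
    (e5 : (d * g - 1) * (g * i - 1) = (1 + f) * (1 + g))
    (hcf : c * f = d * g) :
    (a = 5 ∧ d = 1 ∧ g = 2 ∧ i = 5 ∧ c = 1 ∧ f = 2) ∨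
    (a = 3 ∧ d = 1 ∧ g = 3 ∧ i = 3 ∧ c = 1 ∧ f = 3) ∨
    (a = 2 ∧ d = 1 ∧ g = 5 ∧ i = 2 ∧ c = 1 ∧ f = 5) ∨
    (a = 5 ∧ d = 2 ∧ g = 1 ∧ i = 5 ∧ c = 2 ∧ f = 1) ∨
    (a = 2 ∧ d = 2 ∧ g = 2 ∧ i = 2 ∧ c = 2 ∧ f = 2) ∨
    (a = 1 ∧ d = 2 ∧ g = 5 ∧ i = 1 ∧ c = 2 ∧ f = 5) ∨
    (a = 3 ∧ d = 3 ∧ g = 1 ∧ i = 3 ∧ c = 3 ∧ f = 1) ∨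
    (a = 1 ∧ d = 3 ∧ g = 3 ∧ i = 1 ∧ c = 3 ∧ f = 3) ∨
    (a = 2 ∧ d = 5 ∧ g = 1 ∧ i = 2 ∧ c = 5 ∧ f = 1) ∨
    (a = 1 ∧ d = 5 ∧ g = 2 ∧ i = 1 ∧ c = 5 ∧ f = 2) := by
  have hcle : c ≤ d * g := by
    have t : 0 ≤ c * (f - 1) := mul_nonneg (by linarith) (by linarith)
    nlinarith [t, hcf]
  have hfle : f ≤ d * g := by
    have t : 0 ≤ f * (c - 1) := mul_nonneg (by linarith) (by linarith)
    nlinarith [t, hcf]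
  have hsum : c + f ≤ 1 + d * g := by
    have t : 0 ≤ (c - 1) * (f - 1) := mul_nonneg (by linarith) (by linarith)
    nlinarith [t, hcf]
  have k1 : ((a * d - 1) * (d * g - 1)) * ((d * g - 1) * (g * i - 1))
      = ((1 + c) * (1 + d)) * ((1 + f) * (1 + g)) := by rw [e4, e5]
  have key : (a * d - 1) * (g * i - 1) * ((d * g - 1) * (d * g - 1))
      = (1 + d * g + c + f) * ((1 + d) * (1 + g)) := by
    linear_combination k1 + ((1 + d) * (1 + g)) * hcf
  have hprod : (d - 1) * (g - 1) ≤ (a * d - 1) * (g * i - 1) := by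
    have h1 : d - 1 ≤ a * d - 1 := by nlinarith [mul_nonneg (by linarith : (0:ℤ) ≤ a - 1) (by linarith : (0:ℤ) ≤ d)]
    have h2 : g - 1 ≤ g * i - 1 := by nlinarith [mul_nonneg (by linarith : (0:ℤ) ≤ i - 1) (by linarith : (0:ℤ) ≤ g)]
    exact mul_le_mul h1 h2 (by linarith) (by linarith)
  have bnd : (d - 1) * (g - 1) * ((d * g - 1) * (d * g - 1))
      ≤ (2 + 2 * (d * g)) * ((1 + d) * (1 + g)) := by
    have s1 : (d - 1) * (g - 1) * ((d * g - 1) * (d * g - 1))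
        ≤ (a * d - 1) * (g * i - 1) * ((d * g - 1) * (d * g - 1)) :=
      mul_le_mul_of_nonneg_right hprod (by positivity)
    have s2 : (1 + d * g + c + f) * ((1 + d) * (1 + g))
        ≤ (2 + 2 * (d * g)) * ((1 + d) * (1 + g)) :=
      mul_le_mul_of_nonneg_right (by linarith) (by positivity)
    linarith [key, s1, s2]
  have hg7 : g ≤ 7 := by
    rcases le_or_gt d 1 with h1 | h2
    · have hd1 : d = 1 := by omega
      subst hd1
      have hg2 : 2 ≤ g := by nlinarith
      rcases le_or_gt 2 i with hi2 | hi1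
      · have t1 : 0 ≤ g * (i - 2) := mul_nonneg (by linarith) (by linarith)
        have t2 : (g - 1) * (2 * g - 1) ≤ (g - 1) * (g * i - 1) := by
          nlinarith [mul_nonneg (by linarith : (0:ℤ) ≤ g - 1) t1]
        have t3 : (1 + f) * (1 + g) ≤ (1 + g) * (1 + g) := by
          nlinarith [mul_le_mul_of_nonneg_right (by nlinarith [hfle] : f ≤ g) (by linarith : (0:ℤ) ≤ 1 + g)]
        nlinarith [e5, t2, t3]
      · have hi1' : i = 1 := by omega
        subst hi1'
        rcases le_or_gt c 1 with hc1 | hc2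
        · have hc1' : c = 1 := by omega
          subst hc1'
          nlinarith [e5, hcf]
        · have t : 2 * f ≤ g := by nlinarith [mul_nonneg (by linarith : (0:ℤ) ≤ c - 2) (by linarith : (0:ℤ) ≤ f), hcf]
          nlinarith [e5, mul_le_mul_of_nonneg_right (by linarith : 2 + 2 * f ≤ 2 + g) (by linarith : (0:ℤ) ≤ 1 + g)]
    · by_contra hcon
      have hu : (0:ℤ) ≤ d - 2 := by linarith
      have hv : (0:ℤ) ≤ g - 8 := by linarith
      linarith [bnd, mul_nonneg (pow_nonneg hu 0) (pow_nonneg hv 1), mul_nonneg (pow_nonneg hu 0) (pow_nonneg hv 2), mul_nonneg (pow_nonneg hu 0) (pow_nonneg hv 3), mul_nonneg (pow_nonneg hu 1) (pow_nonneg hv 0), mul_nonneg (pow_nonneg hu 1) (pow_nonneg hv 1), mul_nonneg (pow_nonneg hu 1) (pow_nonneg hv 2), mul_nonneg (pow_nonneg hu 1) (pow_nonneg hv 3), mul_nonneg (pow_nonneg hu 2) (pow_nonneg hv 0), mul_nonneg (pow_nonneg hu 2) (pow_nonneg hv 1), mul_nonneg (pow_nonneg hu 2) (pow_nonneg hv 2),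 mul_nonneg (pow_nonneg hu 2) (pow_nonneg hv 3), mul_nonneg (pow_nonneg hu 3) (pow_nonneg hv 0), mul_nonneg (pow_nonneg hu 3) (pow_nonneg hv 1), mul_nonneg (pow_nonneg hu 3) (pow_nonneg hv 2), mul_nonneg (pow_nonneg hu 3) (pow_nonneg hv 3)]
  have hd7 : d ≤ 7 := by
    rcases le_or_gt g 1 with h1 | h2
    · have hg1 : g = 1 := by omega
      subst hg1
      have hd2 : 2 ≤ d := by nlinarith
      rcases le_or_gt 2 a with ha2 | ha1
      · have t1 : 0 ≤ d * (a - 2) := mul_nonneg (by linarith) (by linarith)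
        have t2 : (d - 1) * (2 * d - 1) ≤ (a * d - 1) * (d - 1) := by
          nlinarith [mul_nonneg (by linarith : (0:ℤ) ≤ d - 1) t1]
        have t3 : (1 + c) * (1 + d) ≤ (1 + d) * (1 + d) := by
          nlinarith [mul_le_mul_of_nonneg_right (by nlinarith [hcle] : c ≤ d) (by linarith : (0:ℤ) ≤ 1 + d)]
        nlinarith [e4, t2, t3]
      · have ha1' : a = 1 := by omega
        subst ha1'
        rcases le_or_gt f 1 with hf1 | hf2
        · have hf1' : f = 1 := by omega
          subst hf1'
          nlinarith [e4, hcf]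
        · have t : 2 * c ≤ d := by nlinarith [mul_nonneg (by linarith : (0:ℤ) ≤ f - 2) (by linarith : (0:ℤ) ≤ c), hcf]
          nlinarith [e4, mul_le_mul_of_nonneg_right (by linarith : 2 + 2 * c ≤ 2 + d) (by linarith : (0:ℤ) ≤ 1 + d)]
    · by_contra hcon
      have hu : (0:ℤ) ≤ g - 2 := by linarith
      have hv : (0:ℤ) ≤ d - 8 := by linarith
      linarith [bnd, mul_nonneg (pow_nonneg hu 0) (pow_nonneg hv 1), mul_nonneg (pow_nonneg hu 0) (pow_nonneg hv 2), mul_nonneg (pow_nonneg hu 0) (pow_nonneg hv 3), mul_nonneg (pow_nonneg hu 1) (pow_nonneg hv 0), mul_nonneg (pow_nonneg hu 1) (pow_nonneg hv 1), mul_nonneg (pow_nonneg hu 1) (pow_nonneg hv 2), mul_nonneg (pow_nonneg hu 1) (pow_nonneg hv 3), mul_nonneg (pow_nonneg hu 2) (pow_nonneg hv 0), mul_nonneg (pow_nonneg hu 2) (pow_nonneg hv 1), mul_nonneg (pow_nonneg hu 2) (pow_nonneg hv 2), mul_nonneg (pow_nonneg hu 2) (pow_nonneg hv 3), mul_nonneg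 (pow_nonneg hu 3) (pow_nonneg hv 0), mul_nonneg (pow_nonneg hu 3) (pow_nonneg hv 1), mul_nonneg (pow_nonneg hu 3) (pow_nonneg hv 2), mul_nonneg (pow_nonneg hu 3) (pow_nonneg hv 3)]
  clear key k1 hprod
  interval_cases d <;> interval_cases g <;>
    first
      | (exfalso; omega)
      | (interval_cases c <;>
        first
              | (exfalso; omega)
              | (exact Or.inl ⟨by omega, by omega, by omega, by omega, by omega, by omega⟩)
              | (exact Or.inr (Or.inl ⟨by omega, by omega, by omega, by omega, by omega, by omega⟩))
              | (exact Or.inr (Or.inr (Or.inl ⟨by omega, by omega, by omega, by omega, by omega, by omega⟩)))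
              | (exact Or.inr (Or.inr (Or.inr (Or.inl ⟨by omega, by omega, by omega, by omega, by omega, by omega⟩))))
              | (exact Or.inr (Or.inr (Or.inr (Or.inr (Or.inl ⟨by omega, by omega, by omega, by omega, by omega, by omega⟩)))))
              | (exact Or.inr (Or.inr (Or.inr (Or.inr (Or.inr (Or.inl ⟨by omega, by omega, by omega, by omega, by omega, by omega⟩))))))
              | (exact Or.inr (Or.inr (Or.inr (Or.inr (Or.inr (Or.inr (Or.inl ⟨by omega, by omega, by omega, by omega, by omega, by omega⟩)))))))
              | (exact Or.inr (Or.inr (Or.inr (Or.inr (Or.inr (Or.inr (Or.inr (Or.inl ⟨by omega, by omega, by omega, by omega, by omega, by omega⟩))))))))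
              | (exact Or.inr (Or.inr (Or.inr (Or.inr (Or.inr (Or.inr (Or.inr (Or.inr (Or.inl ⟨by omega, by omega, by omega, by omega, by omega, by omega⟩)))))))))
              | (exact Or.inr (Or.inr (Or.inr (Or.inr (Or.inr (Or.inr (Or.inr (Or.inr (Or.inr (⟨by omega, by omega, by omega, by omega, by omega, by omega⟩)))))))))))


/-- Corollary, surjectivity of p₃: every arithmetic Y-frieze
pattern of width 3 arises from a closed arithmetic Coxeter frieze pattern of
width 3. -/
theorem p3_surjective
    (a b c d e f g h i : ℤ)
    (ha : 0 < a) (hb : 0 < b) (hc : 0 < c) (hd : 0 < d) (he : 0 < e)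
    (hf : 0 < f) (hg : 0 < g) (hh : 0 < h) (hi : 0 < i)
    (e1 : a * d = 1 + b)
    (e2 : d * g = 1 + e)
    (e3 : g * i = 1 + h)
    (e4 : b * e = (1 + c) * (1 + d))
    (e5 : e * h = (1 + f) * (1 + g))
    (e6 : c * f = 1 + e)
    (y : ℤ → ℤ)
    (hyper : ∀ r : ℤ, y (r + 6) = y r)
    (hy0 : y 0 = a) (hy1 : y 1 = d) (hy2 : y 2 = g)
    (hy3 : y 3 = i) (hy4 : y 4 = c) (hy5 : y 5 = f) :
    ∃ F : ℤ → ℤ → ℤ,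
      (∀ r : ℤ, F r (r - 1) = 0) ∧
      (∀ r : ℤ, F r r = 1) ∧
      (∀ r : ℤ, F r (r + 4) = 1) ∧
      (∀ r s : ℤ, r ≤ s → s ≤ r + 4 → 1 ≤ F r s) ∧
      (∀ r s : ℤ, r ≤ s → s ≤ r + 3 →
        F r s * F (r + 1) (s + 1) - F r (s + 1) * F (r + 1) s = 1) ∧
      (∀ r : ℤ, F r (r + 2) = y r) := by
  have hbv : b = a * d - 1 := by linarith
  have hev : e = d * g - 1 := by linarith
  have hhv : h = g * i - 1 := by linarith
  subst hbv hev hhv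
  have hcf : c * f = d * g := by linarith
  rcases classify a c d f g i ha hc hd hf hg hi hb he hh e4 e5 hcf with
    hcase|hcase|hcase|hcase|hcase|hcase|hcase|hcase|hcase|hcase <;>
    obtain ⟨ca, cd, cg, ci, cc, cf⟩ := hcase
  · exact masterF 3 2 1 3 2 1 y (by norm_num) (by norm_num) (by norm_num) (by norm_num) (by norm_num) (by norm_num) 
      (by norm_num) (by norm_num) (by norm_num) (by norm_num) (by norm_num) (by norm_num) 
      (by norm_num) (by norm_num) (by norm_num) 
      (by norm_num) (by norm_num) (by norm_num) (by norm_num) (by norm_num) (by norm_num) 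
      hyper (by omega) (by omega) (by omega) (by omega) (by omega) (by omega)
  · exact masterF 2 2 1 4 1 2 y (by norm_num) (by norm_num) (by norm_num) (by norm_num) (by norm_num) (by norm_num) 
      (by norm_num) (by norm_num) (by norm_num) (by norm_num) (by norm_num) (by norm_num) 
      (by norm_num) (by norm_num) (by norm_num) 
      (by norm_num) (by norm_num) (by norm_num) (by norm_num) (by norm_num) (by norm_num) 
      hyper (by omega) (by omega) (by omega) (by omega) (by omega) (by omega)
  · exact masterF 3 1 2 3 1 2 y (by norm_num) (by norm_num) (by norm_num) (by norm_num) (by norm_num) (by norm_num) 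
      (by norm_num) (by norm_num) (by norm_num) (by norm_num) (by norm_num) (by norm_num) 
      (by norm_num) (by norm_num) (by norm_num) 
      (by norm_num) (by norm_num) (by norm_num) (by norm_num) (by norm_num) (by norm_num) 
      hyper (by omega) (by omega) (by omega) (by omega) (by omega) (by omega)
  · exact masterF 2 3 1 2 3 1 y (by norm_num) (by norm_num) (by norm_num) (by norm_num) (by norm_num) (by norm_num) 
      (by norm_num) (by norm_num) (by norm_num) (by norm_num) (by norm_num) (by norm_num) 
      (by norm_num) (by norm_num) (by norm_num) 
      (by norm_num) (by norm_num) (by norm_num) (by norm_num) (by norm_num) (by norm_num) 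
      hyper (by omega) (by omega) (by omega) (by omega) (by omega) (by omega)
  · exact masterF 1 3 1 3 1 3 y (by norm_num) (by norm_num) (by norm_num) (by norm_num) (by norm_num) (by norm_num) 
      (by norm_num) (by norm_num) (by norm_num) (by norm_num) (by norm_num) (by norm_num) 
      (by norm_num) (by norm_num) (by norm_num) 
      (by norm_num) (by norm_num) (by norm_num) (by norm_num) (by norm_num) (by norm_num) 
      hyper (by omega) (by omega) (by omega) (by omega) (by omega) (by omega)
  · exact masterF 2 1 3 2 1 3 y (by norm_num) (by norm_num) (by norm_num) (by norm_num) (by norm_num) (by norm_num) 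
      (by norm_num) (by norm_num) (by norm_num) (by norm_num) (by norm_num) (by norm_num) 
      (by norm_num) (by norm_num) (by norm_num) 
      (by norm_num) (by norm_num) (by norm_num) (by norm_num) (by norm_num) (by norm_num) 
      hyper (by omega) (by omega) (by omega) (by omega) (by omega) (by omega)
  · exact masterF 1 4 1 2 2 2 y (by norm_num) (by norm_num) (by norm_num) (by norm_num) (by norm_num) (by norm_num) 
      (by norm_num) (by norm_num) (by norm_num) (by norm_num) (by norm_num) (by norm_num) 
      (by norm_num) (by norm_num) (by norm_num) 
      (by norm_num) (by norm_num) (by norm_num) (by norm_num) (by norm_num) (by norm_num) 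
      hyper (by omega) (by omega) (by omega) (by omega) (by omega) (by omega)
  · exact masterF 1 2 2 2 1 4 y (by norm_num) (by norm_num) (by norm_num) (by norm_num) (by norm_num) (by norm_num) 
      (by norm_num) (by norm_num) (by norm_num) (by norm_num) (by norm_num) (by norm_num) 
      (by norm_num) (by norm_num) (by norm_num) 
      (by norm_num) (by norm_num) (by norm_num) (by norm_num) (by norm_num) (by norm_num) 
      hyper (by omega) (by omega) (by omega) (by omega) (by omega) (by omega)
  · exact masterF 1 3 2 1 3 2 y (by norm_num) (by norm_num) (by norm_num) (by norm_num) (by norm_num) (by norm_num) 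
      (by norm_num) (by norm_num) (by norm_num) (by norm_num) (by norm_num) (by norm_num) 
      (by norm_num) (by norm_num) (by norm_num) 
      (by norm_num) (by norm_num) (by norm_num) (by norm_num) (by norm_num) (by norm_num) 
      hyper (by omega) (by omega) (by omega) (by omega) (by omega) (by omega)
  · exact masterF 1 2 3 1 2 3 y (by norm_num) (by norm_num) (by norm_num) (by norm_num) (by norm_num) (by norm_num) 
      (by norm_num) (by norm_num) (by norm_num) (by norm_num) (by norm_num) (by norm_num) 
      (by norm_num) (by norm_num) (by norm_num) 
      (by norm_num) (by norm_num) (by norm_num) (by norm_num) (by norm_num) (by norm_num) 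
      hyper (by omega) (by omega) (by omega) (by omega) (by omega) (by omega)
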